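/- In ℤ[i]/5ℤ[i], the element 2 + 2i is not expressible as a sum of at most 3 elements of norm 1; i.e., the Cayley graph G_5 has diameter at least 4. -/
import Mathlib

/-- The ring `ℤ[i]/5ℤ[i]`, modeled as pairs `(a, b)` over `ℤ/5ℤ` representing `a + bi`. -/
abbrev R5 := ZMod 5 × ZMod 5

/-- The norm `N(a+bi) = a² + b²`. -/
def Gnorm (β : R5) : ZMod 5 := β.1 ^ 2 + β.2 ^ 2

lemma key1 : ∀ a : R5, Gnorm a = 1 → ((2 : ZMod 5), (2 : ZMod 5)) ≠ a := by decide

lemma key2 : ∀ a b : R5, Gnorm a = 1 → Gnorm b = 1 →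
    ((2 : ZMod 5), (2 : ZMod 5)) ≠ a + b := by decide

lemma key3 : ∀ a b c : R5, Gnorm a = 1 → Gnorm b = 1 → Gnorm c = 1 →
    ((2 : ZMod 5), (2 : ZMod 5)) ≠ a + b + c := by decide

/-- In `ℤ[i]/5ℤ[i]`, the element `2 + 2i` is not a sum of at most three elements of
norm one; i.e. the Cayley graph `G_5` has diameter at least `4`. -/
theorem G5_diameter_at_least_four :
    ¬ ∃ k ≤ 3, ∃ f : Fin k → R5, (∀ j, Gnorm (f j) = 1) ∧
      ((2 : ZMod 5), (2 : ZMod 5)) = ∑ j, f j := by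
  rintro ⟨k, hk, f, h1, h2⟩
  interval_cases k
  · simp [Finset.sum_empty] at h2
    exact absurd h2 (by decide)
  · rw [Fin.sum_univ_one] at h2
    exact key1 (f 0) (h1 0) h2
  · rw [Fin.sum_univ_two] at h2
    exact key2 (f 0) (f 1) (h1 0) (h1 1) h2
  · rw [Fin.sum_univ_three] at h2
    exact key3 (f 0) (f 1) (f 2) (h1 0) (h1 1) (h1 2) h2
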